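/- Let F be an antichain in the product poset L(k₁,…,kₙ) = {0,…,k₁-1} × ⋯ × {0,…,kₙ-1} (with the coordinatewise partial order), and for each i let F_i = F ∩ L_i where L_i is the set of vectors whose coordinates sum to i. Then ∑_i |F_i|/|L_i| ≤ 1. -/

import Mathlib

open Finset

set_option linter.unusedSectionVars false

namespace MLYM

variable {X : Type} [Fintype X] [DecidableEq X]

/-- level counts, indexed by `ℤ`. -/
def lz (rk : X → ℕ) (r : ℤ) : ℕ := (Finset.univ.filter fun x => (rk x : ℤ) = r).card

lemma lz_pos {rk : X → ℕ} {r : ℤ} (x : X) (hx : (rk x : ℤ) = r) : 0 < lz rk r :=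
  Finset.card_pos.2 ⟨x, Finset.mem_filter.2 ⟨Finset.mem_univ x, hx⟩⟩

lemma lz_ne_zero {rk : X → ℕ} {r : ℤ} (x : X) (hx : (rk x : ℤ) = r) :
    (lz rk r : ℝ) ≠ 0 := by
  have := lz_pos x hx
  positivity

lemma lz_eq_zero {rk : X → ℕ} {N : ℕ} (hrk : ∀ x, rk x ≤ N) {r : ℤ}
    (hr : r < 0 ∨ (N : ℤ) < r) : lz rk r = 0 := by
  rw [lz, Finset.card_eq_zero, Finset.filter_eq_empty_iff]
  intro x _
  have h1 := hrk x
  have h2 : (0:ℤ) ≤ (rk x : ℤ) := Int.natCast_nonneg _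
  have h3 : (rk x : ℤ) ≤ (N : ℤ) := by exact_mod_cast h1
  intro hc; omega

def OneLC (p : ℤ → ℕ) : Prop := ∀ a b : ℤ, b ≤ a → p (a+1) * p (b-1) ≤ p a * p b

lemma glc {p : ℤ → ℕ} (h : OneLC p) (j : ℕ) : ∀ c d : ℤ, d ≤ c →
    p (c + j) * p (d - j) ≤ p c * p d := by
  induction j with
  | zero => simp
  | succ j ih =>
    intro c d hdc
    have e1 : c + ((j:ℤ)+1) = (c+j)+1 := by ring
    have e2 : d - ((j:ℤ)+1) = (d-j)-1 := by ring
    calc p (c + ((j:ℕ)+1:ℕ)) * p (d - ((j:ℕ)+1:ℕ))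
        = p ((c+j)+1) * p ((d-j)-1) := by push_cast; rw [e1, e2]
      _ ≤ p (c+j) * p (d-j) := h _ _ (by omega)
      _ ≤ p c * p d := ih c d hdc

lemma glc₂ {p : ℤ → ℕ} (h : OneLC p) {c d c' d' : ℤ} (hsum : c + d = c' + d')
    (h1 : d' ≤ d) (h2 : d' ≤ c) : p c' * p d' ≤ p c * p d := by
  rcases le_total d c with hdc | hcd
  · have hj : ((d - d').toNat : ℤ) = d - d' := Int.toNat_of_nonneg (by omega)
    have := glc h ((d - d').toNat) c d hdc
    rw [show c + ((d - d').toNat : ℤ) = c' by omega,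
        show d - ((d - d').toNat : ℤ) = d' by omega] at this
    exact this
  · have hj : ((c - d').toNat : ℤ) = c - d' := Int.toNat_of_nonneg (by omega)
    have := glc h ((c - d').toNat) d c hcd
    rw [show d + ((c - d').toNat : ℤ) = c' by omega,
        show c - ((c - d').toNat : ℤ) = d' by omega] at this
    rw [mul_comm (p c) (p d)]
    exact this

lemma shift_up (g : ℤ → ℕ) (k : ℕ) :
    (∑ t ∈ range k, g ((t:ℤ)+1)) + g 0 = (∑ t ∈ range k, g (t:ℤ)) + g (k:ℤ) := by
  induction k with
  | zero => simp
  | succ k ih =>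
    rw [Finset.sum_range_succ, Finset.sum_range_succ]
    push_cast
    omega

lemma shift_down (g : ℤ → ℕ) (k : ℕ) :
    (∑ t ∈ range k, g ((t:ℤ)-1)) + g ((k:ℤ)-1) = (∑ t ∈ range k, g (t:ℤ)) + g (-1) := by
  have h := shift_up (fun r => g (r-1)) k
  simp only [add_sub_cancel_right, zero_sub] at h
  omega

lemma conv_oneLC {p : ℤ → ℕ} (h : OneLC p) (k : ℕ) :
    OneLC (fun m => ∑ s ∈ range k, p (m - s)) := by
  intro a b hba
  dsimp only
  have eq1 : (∑ s ∈ range k, p (a + 1 - s)) + p (a + 1 - k)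
      = (∑ s ∈ range k, p (a - s)) + p (a+1) := by
    have h0 := shift_down (fun r => p (a - r)) k
    calc (∑ s ∈ range k, p (a + 1 - s)) + p (a + 1 - k)
        = (∑ s ∈ range k, p (a - ((s:ℤ)-1))) + p (a - ((k:ℤ)-1)) := by
          congr 1
          · exact Finset.sum_congr rfl (fun t _ => by congr 1; ring)
          · congr 1; ring
      _ = (∑ s ∈ range k, p (a - s)) + p (a - (-1)) := h0
      _ = (∑ s ∈ range k, p (a - s)) + p (a + 1) := by norm_num
  have eq2 : (∑ s ∈ range k, p (b - 1 - s)) + p b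
      = (∑ s ∈ range k, p (b - s)) + p (b - k) := by
    have h0 := shift_up (fun r => p (b - r)) k
    calc (∑ s ∈ range k, p (b - 1 - s)) + p b
        = (∑ s ∈ range k, p (b - ((s:ℤ)+1))) + p (b - 0) := by
          congr 1
          · exact Finset.sum_congr rfl (fun t _ => by congr 1; ring)
          · congr 1; ring
      _ = (∑ s ∈ range k, p (b - s)) + p (b - k) := h0
  have ineq1 : p (a+1) * (∑ s ∈ range k, p (b - 1 - s))
      ≤ p b * (∑ s ∈ range k, p (a - s)) := by
    rw [Finset.mul_sum, Finset.mul_sum]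
    refine Finset.sum_le_sum fun t _ => ?_
    exact glc₂ h (c := b) (d := a - t) (c' := a+1) (d' := b-1-t)
      (by ring) (by omega) (by omega)
  have ineq2 : (∑ s ∈ range k, p (a - s)) * p (b - k)
      ≤ p (a + 1 - k) * (∑ s ∈ range k, p (b - 1 - s)) := by
    rw [Finset.sum_mul, Finset.mul_sum]
    refine Finset.sum_le_sum fun s hs => ?_
    have hsk : (s:ℤ) + 1 ≤ k := by
      have := Finset.mem_range.1 hs; omega
    exact glc₂ h (c := a + 1 - k) (d := b - 1 - s) (c' := a - s) (d' := b - k)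
      (by ring) (by omega) (by omega)
  have e1' : (∑ s ∈ range k, p (a + 1 - s)) * (∑ s ∈ range k, p (b - 1 - s))
        + p (a + 1 - k) * (∑ s ∈ range k, p (b - 1 - s))
      = (∑ s ∈ range k, p (a - s)) * (∑ s ∈ range k, p (b - 1 - s))
        + p (a+1) * (∑ s ∈ range k, p (b - 1 - s)) := by
    rw [← add_mul, ← add_mul, eq1]
  have e2' : (∑ s ∈ range k, p (a - s)) * (∑ s ∈ range k, p (b - 1 - s))
        + (∑ s ∈ range k, p (a - s)) * p b
      = (∑ s ∈ range k, p (a - s)) * (∑ s ∈ range k, p (b - s))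
        + (∑ s ∈ range k, p (a - s)) * p (b - k) := by
    rw [← mul_add, ← mul_add, eq2]
  have hcomm : p b * (∑ s ∈ range k, p (a - s)) = (∑ s ∈ range k, p (a - s)) * p b :=
    mul_comm _ _
  omega

def HasFlows (X : Type) [Fintype X] [DecidableEq X] [PartialOrder X]
    (rk : X → ℕ) (N : ℕ) : Prop :=
  (∀ x, rk x ≤ N) ∧
  (∀ i : ℕ, i ≤ N → 0 < lz rk (i:ℤ)) ∧
  OneLC (lz rk) ∧
  (∀ i : ℕ, i < N → ∃ f : X → X → ℝ,
     (∀ x y, 0 ≤ f x y) ∧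
     (∀ x y, f x y ≠ 0 → x ≤ y ∧ rk x = i ∧ rk y = i+1) ∧
     (∀ x, rk x = i → ∑ y, f x y = 1 / (lz rk (i:ℤ) : ℝ)) ∧
     (∀ y, rk y = i+1 → ∑ x, f x y = 1 / (lz rk ((i:ℤ)+1) : ℝ)))

lemma lz_prod (rk : X → ℕ) (k : ℕ) (r : ℤ) :
    lz (fun y : Fin k × X => (y.1 : ℕ) + rk y.2) r = ∑ s ∈ range k, lz rk (r - s) := by
  unfold lz
  rw [Finset.card_filter]
  rw [Fintype.sum_prod_type]
  rw [← Fin.sum_univ_eq_sum_range (fun s => (Finset.univ.filter fun x : X => (rk x : ℤ) = r - s).card)]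
  refine Finset.sum_congr rfl fun s _ => ?_
  rw [Finset.card_filter]
  refine Finset.sum_congr rfl fun x _ => ?_
  congr 1
  rw [eq_iff_iff]
  constructor <;> intro h3 <;> push_cast at h3 ⊢ <;> omega

lemma sum_fin_ite_val {k : ℕ} (v : ℕ) (c : Fin k → ℝ) :
    (∑ t : Fin k, if (t:ℕ) = v then c t else 0) = if h : v < k then c ⟨v, h⟩ else 0 := by
  split_ifs with h
  · rw [Finset.sum_eq_single (⟨v, h⟩ : Fin k)]
    · simp
    · intro t _ ht
      rw [if_neg]
      intro hc
      exact ht (Fin.ext hc)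
    · intro ht; exact absurd (Finset.mem_univ _) ht
  · refine Finset.sum_eq_zero fun t _ => ?_
    rw [if_neg]
    intro hc
    exact h (hc ▸ t.isLt)


lemma sum_fin_ite_val' {k : ℕ} (v : ℕ) (c : Fin k → ℝ) :
    (∑ t : Fin k, if v = (t:ℕ) then c t else 0) = if h : v < k then c ⟨v, h⟩ else 0 := by
  rw [← sum_fin_ite_val v c]
  exact Finset.sum_congr rfl fun t _ => if_congr eq_comm rfl rfl

lemma sum_ite_const {s : Finset X} (c : Prop) [Decidable c] (f : X → ℝ) :
    (∑ y ∈ s, if c then f y else 0) = if c then ∑ y ∈ s, f y else 0 := by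
  split_ifs <;> simp


theorem hasFlows_prod [PartialOrder X] {rk : X → ℕ} {N : ℕ} (h : HasFlows X rk N) (k : ℕ) (hk : 1 ≤ k) :
    HasFlows (Fin k × X) (fun y => (y.1 : ℕ) + rk y.2) (k - 1 + N) := by
  obtain ⟨hrk, hpos, hlc, hfl⟩ := h
  set p : ℤ → ℕ := lz rk with hp
  have hq : ∀ r : ℤ, lz (fun y : Fin k × X => (y.1:ℕ) + rk y.2) r
      = ∑ s ∈ range k, p (r - s) := lz_prod rk k
  have qpos : ∀ r : ℤ, 0 ≤ r → r ≤ ((k - 1 + N : ℕ) : ℤ) → 0 < ∑ s ∈ range k, p (r - s) := by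
    intro r h0 h1
    have : ∃ s₀ : ℕ, s₀ < k ∧ 0 < p (r - s₀) := by
      rcases le_or_gt r N with hr | hr
      · refine ⟨0, hk, ?_⟩
        have hr0 : r = ((r.toNat : ℕ) : ℤ) := by omega
        have : ((0:ℕ):ℤ) = 0 := rfl
        rw [show r - ((0:ℕ):ℤ) = ((r.toNat : ℕ) : ℤ) by omega]
        exact hpos r.toNat (by omega)
      · refine ⟨(r - N).toNat, by omega, ?_⟩
        rw [show r - (((r - N).toNat : ℕ) : ℤ) = ((N:ℕ):ℤ) by omega]
        exact hpos N le_rfl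
    obtain ⟨s₀, hs₀k, hs₀p⟩ := this
    calc 0 < p (r - s₀) := hs₀p
      _ ≤ ∑ s ∈ range k, p (r - s) :=
        Finset.single_le_sum (f := fun s : ℕ => p (r - s)) (fun _ _ => Nat.zero_le _) (Finset.mem_range.2 hs₀k)
  refine ⟨?_, ?_, ?_, ?_⟩
  · rintro ⟨s, x⟩
    have h1 := hrk x
    have h2 := s.isLt
    simp only
    omega
  · intro i hi
    rw [hq]
    exact qpos i (by omega) (by exact_mod_cast Nat.cast_le.2 hi)
  · have he : lz (fun y : Fin k × X => (y.1:ℕ) + rk y.2)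
        = fun m => ∑ s ∈ range k, p (m - s) := funext hq
    rw [he]
    exact conv_oneLC hlc k
  · intro m hm
    choose f hf using hfl
    set Ft : ℕ → X → X → ℝ := fun i => if hi : i < N then f i hi else fun _ _ => 0 with hFt
    have Ftnn : ∀ i x y, 0 ≤ Ft i x y := by
      intro i x y
      rw [hFt]; dsimp only
      split_ifs with hi
      · exact (hf i hi).1 x y
      · exact le_rfl
    have Ftsupp : ∀ i x y, Ft i x y ≠ 0 → i < N ∧ x ≤ y ∧ rk x = i ∧ rk y = i+1 := by
      intro i x y hne
      rw [hFt] at hne; dsimp only at hne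
      split_ifs at hne with hi
      · exact ⟨hi, (hf i hi).2.1 x y hne⟩
      · exact absurd rfl hne
    have Ftout : ∀ i, i < N → ∀ x, rk x = i → ∑ y, Ft i x y = 1 / (p (i:ℤ) : ℝ) := by
      intro i hi x hx
      rw [hFt]; dsimp only
      rw [dif_pos hi]
      exact (hf i hi).2.2.1 x hx
    have Ftin : ∀ i, i < N → ∀ y, rk y = i+1 → ∑ x, Ft i x y = 1 / (p ((i:ℤ)+1) : ℝ) := by
      intro i hi y hy
      rw [hFt]; dsimp only
      rw [dif_pos hi]
      exact (hf i hi).2.2.2 y hy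
    set Pn : ℕ → ℕ := fun σ => ∑ t ∈ range σ, p ((m:ℤ)+1-t) with hPn
    set Qn : ℕ → ℕ := fun σ => ∑ t ∈ range σ, p ((m:ℤ)-t) with hQn
    have hWmpos : 0 < Qn k := by
      exact qpos (m:ℤ) (by positivity) (by push_cast; omega)
    have hW1pos : 0 < Pn k := by
      exact qpos ((m:ℤ)+1) (by positivity) (by push_cast; omega)
    set Wm : ℝ := (Qn k : ℝ) with hWm
    set W1 : ℝ := (Pn k : ℝ) with hW1
    have hWmpos' : (0:ℝ) < Wm := by rw [hWm]; exact_mod_cast hWmpos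
    have hW1pos' : (0:ℝ) < W1 := by rw [hW1]; exact_mod_cast hW1pos
    have hWmne : Wm ≠ 0 := ne_of_gt hWmpos'
    have hW1ne : W1 ≠ 0 := ne_of_gt hW1pos'
    have hQsucc : ∀ σ : ℕ, Qn (σ+1) = Qn σ + p ((m:ℤ)-σ) := fun σ => Finset.sum_range_succ _ σ
    have hPsucc : ∀ σ : ℕ, Pn (σ+1) = Pn σ + p ((m:ℤ)+1-σ) := fun σ => Finset.sum_range_succ _ σ
    have hPQ : ∀ σ : ℕ, Pn (σ+1) = p ((m:ℤ)+1) + Qn σ := by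
      intro σ
      rw [hPn, hQn]; dsimp only
      rw [Finset.sum_range_succ']
      have e1 : ∀ t ∈ range σ, p ((m:ℤ)+1-((t+1:ℕ):ℤ)) = p ((m:ℤ)-(t:ℕ)) := fun t _ => by
        rw [show ((m:ℤ)+1-((t+1:ℕ):ℤ)) = (m:ℤ)-(t:ℕ) from by push_cast; ring]
      rw [Finset.sum_congr rfl e1, show ((m:ℤ)+1-((0:ℕ):ℤ)) = (m:ℤ)+1 from by push_cast; ring, add_comm]
    set A : ℕ → ℝ := fun s => (Pn (s+1) : ℝ)/W1 - (Qn s : ℝ)/Wm with hA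
    set B : ℕ → ℝ := fun s => (Qn (s+1) : ℝ)/Wm - (Pn (s+1) : ℝ)/W1 with hB
    have hABsum : ∀ s : ℕ, A s + B s = (p ((m:ℤ)-s) : ℝ)/Wm := by
      intro s
      rw [hA, hB]; dsimp only
      rw [hQsucc s]
      push_cast
      ring
    have hABsum' : ∀ s : ℕ, A (s+1) + B s = (p ((m:ℤ)-s) : ℝ)/W1 := by
      intro s
      rw [hA, hB]; dsimp only
      have e : Pn (s+1+1) = Pn (s+1) + p ((m:ℤ)-s) := by
        rw [hPsucc (s+1)]
        congr 2
        push_cast; ring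
      rw [e]
      push_cast; ring
    have hA0 : A 0 = (p ((m:ℤ)+1) : ℝ)/W1 := by
      rw [hA]; dsimp only
      have h1 : Pn 1 = p ((m:ℤ)+1) := by
        rw [hPn]; dsimp only
        rw [Finset.sum_range_one, show ((m:ℤ)+1-((0:ℕ):ℤ)) = (m:ℤ)+1 from by push_cast; ring]
      have h2 : Qn 0 = 0 := by rw [hQn]; simp
      rw [h1, h2]
      simp
    have hBtop : B (k-1) = 0 := by
      rw [hB]; dsimp only
      rw [show k - 1 + 1 = k by omega, ← hWm, ← hW1, div_self hWmne, div_self hW1ne, sub_self]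
    have hAtop : ∀ s : ℕ, s + N = m → A s = 0 := by
      intro s hs
      have h1 : Pn (s+1) = 0 := by
        rw [hPn]; dsimp only
        refine Finset.sum_eq_zero fun t ht => ?_
        have ht' := Finset.mem_range.1 ht
        rw [hp]
        refine lz_eq_zero hrk (Or.inr ?_)
        push_cast; omega
      have h2 : Qn s = 0 := by
        rw [hQn]; dsimp only
        refine Finset.sum_eq_zero fun t ht => ?_
        have ht' := Finset.mem_range.1 ht
        rw [hp]
        refine lz_eq_zero hrk (Or.inr ?_)
        push_cast; omega
      rw [hA]; dsimp only
      rw [h1, h2]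
      norm_num
    have hAbot : m + 1 < k → A (m+1) = 0 := by
      intro hmk
      have h1 : Pn (m+1+1) = Pn k := by
        rw [hPn]; dsimp only
        refine Finset.sum_subset (Finset.range_subset_range.2 (by omega)) fun t ht hts => ?_
        have ht1 := Finset.mem_range.1 ht
        have ht2 : m + 2 ≤ t := by
          by_contra hc
          exact hts (Finset.mem_range.2 (by omega))
        rw [hp]
        refine lz_eq_zero hrk (Or.inl ?_)
        push_cast; omega
      have h2 : Qn (m+1) = Qn k := by
        rw [hQn]; dsimp only
        refine Finset.sum_subset (Finset.range_subset_range.2 (by omega)) fun t ht hts => ?_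
        have ht1 := Finset.mem_range.1 ht
        have ht2 : m + 1 ≤ t := by
          by_contra hc
          exact hts (Finset.mem_range.2 (by omega))
        rw [hp]
        refine lz_eq_zero hrk (Or.inl ?_)
        push_cast; omega
      rw [hA]; dsimp only
      rw [h1, h2, ← hWm, ← hW1, div_self hW1ne, div_self hWmne, sub_self]
    have hAnn : ∀ s : ℕ, s < k → 0 ≤ A s := by
      intro s hs
      rw [hA]; dsimp only
      rw [sub_nonneg, div_le_div_iff₀ hWmpos' hW1pos', hWm, hW1]
      have hn : Qn s * Pn k ≤ Pn (s+1) * Qn k := by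
        have e1 : Pn k = Qn (k-1) + p ((m:ℤ)+1) := by
          have e := hPQ (k-1)
          rw [show k - 1 + 1 = k by omega] at e
          rw [e, add_comm]
        have e2 : Qn (k-1) ≤ Qn k := Finset.sum_le_sum_of_subset (Finset.range_subset_range.2 (by omega))
        have e3 : Qn s ≤ Qn k := Finset.sum_le_sum_of_subset (Finset.range_subset_range.2 (by omega))
        have e4 : Pn (s+1) = p ((m:ℤ)+1) + Qn s := hPQ s
        calc Qn s * Pn k = Qn s * Qn (k-1) + Qn s * p ((m:ℤ)+1) := by rw [e1, mul_add]
          _ ≤ Qn s * Qn k + Qn k * p ((m:ℤ)+1) :=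
              Nat.add_le_add (Nat.mul_le_mul_left _ e2) (Nat.mul_le_mul_right _ e3)
          _ = Pn (s+1) * Qn k := by rw [e4]; ring
      exact_mod_cast hn
    have hBnn : ∀ s : ℕ, s < k → 0 ≤ B s := by
      intro s hs
      rw [hB]; dsimp only
      rw [sub_nonneg, div_le_div_iff₀ hW1pos' hWmpos', hWm, hW1]
      have hn : Pn (s+1) * Qn k ≤ Qn (s+1) * Pn k := by
        have hσ : s + 1 ≤ k := hs
        have eW1 : Pn k = Pn (s+1) + ∑ u ∈ Finset.Ico (s+1) k, p ((m:ℤ)+1-u) := by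
          rw [hPn]; dsimp only
          simp only [Finset.range_eq_Ico]
          rw [Finset.sum_Ico_consecutive _ (Nat.zero_le (s+1)) hσ]
        have eWm : Qn k = Qn (s+1) + ∑ u ∈ Finset.Ico (s+1) k, p ((m:ℤ)-u) := by
          rw [hQn]; dsimp only
          simp only [Finset.range_eq_Ico]
          rw [Finset.sum_Ico_consecutive _ (Nat.zero_le (s+1)) hσ]
        have cross : Pn (s+1) * (∑ u ∈ Finset.Ico (s+1) k, p ((m:ℤ)-u))
            ≤ Qn (s+1) * (∑ u ∈ Finset.Ico (s+1) k, p ((m:ℤ)+1-u)) := by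
          rw [hPn, hQn]; dsimp only
          rw [Finset.sum_mul_sum, Finset.sum_mul_sum]
          refine Finset.sum_le_sum fun t ht => Finset.sum_le_sum fun u hu => ?_
          have ht' := Finset.mem_range.1 ht
          have hu' := (Finset.mem_Ico.1 hu).1
          have htu : (t:ℤ) ≤ (u:ℤ) := by exact_mod_cast le_trans (le_of_lt ht') hu'
          exact glc₂ hlc (c := (m:ℤ)-t) (d := (m:ℤ)+1-u) (c' := (m:ℤ)+1-t) (d' := (m:ℤ)-u)
            (by ring) (by omega) (by omega)
        calc Pn (s+1) * Qn k
            = Pn (s+1) * Qn (s+1) + Pn (s+1) * (∑ u ∈ Finset.Ico (s+1) k, p ((m:ℤ)-u)) := by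
              rw [eWm, mul_add]
          _ ≤ Pn (s+1) * Qn (s+1) + Qn (s+1) * (∑ u ∈ Finset.Ico (s+1) k, p ((m:ℤ)+1-u)) :=
              Nat.add_le_add_left cross _
          _ = Qn (s+1) * Pn k := by rw [eW1]; ring
      exact_mod_cast hn
    refine ⟨fun a b =>
        (if ((b.1:ℕ) = (a.1:ℕ) ∧ (a.1:ℕ) + rk a.2 = m) then A (a.1:ℕ) * Ft (rk a.2) a.2 b.2 else 0)
      + (if ((b.1:ℕ) = (a.1:ℕ)+1 ∧ b.2 = a.2 ∧ (a.1:ℕ) + rk a.2 = m) then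
          B (a.1:ℕ) / (p ((m:ℤ) - ((a.1:ℕ):ℤ)) : ℝ) else 0),
      ?_, ?_, ?_, ?_⟩
    · -- nonnegativity
      intro a b
      dsimp only
      refine add_nonneg ?_ ?_
      · split_ifs with h1
        · exact mul_nonneg (hAnn _ a.1.isLt) (Ftnn _ _ _)
        · exact le_rfl
      · split_ifs with h2
        · exact div_nonneg (hBnn _ a.1.isLt) (Nat.cast_nonneg _)
        · exact le_rfl
    · -- support
      intro a b hab
      dsimp only at hab ⊢
      by_cases h1 : ((b.1:ℕ) = (a.1:ℕ) ∧ (a.1:ℕ) + rk a.2 = m)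
      · by_cases h2 : ((b.1:ℕ) = (a.1:ℕ)+1 ∧ b.2 = a.2 ∧ (a.1:ℕ) + rk a.2 = m)
        · exact absurd h1.1 (by omega)
        · rw [if_pos h1, if_neg h2, add_zero] at hab
          have hFne : Ft (rk a.2) a.2 b.2 ≠ 0 := right_ne_zero_of_mul hab
          obtain ⟨hiN, hxy, hrx, hry⟩ := Ftsupp _ _ _ hFne
          exact ⟨Prod.le_def.2 ⟨(Fin.ext h1.1).ge, hxy⟩, h1.2, by omega⟩
      · rw [if_neg h1, zero_add] at hab
        split_ifs at hab with h2
        · obtain ⟨hb1, hb2, hbm⟩ := h2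
          refine ⟨Prod.le_def.2 ⟨Fin.le_def.2 (by omega), le_of_eq hb2.symm⟩, hbm, ?_⟩
          rw [hb2]
          omega
        · exact absurd rfl hab
    · -- out-marginal
      rintro ⟨s, x⟩ ha
      dsimp only at ha ⊢
      rw [hq, show (∑ s ∈ range k, p ((m:ℤ) - (s:ℕ))) = Qn k from rfl, ← hWm]
      simp only [Fintype.sum_prod_type]
      simp only [ha, eq_self_iff_true, and_true]
      simp only [Finset.sum_add_distrib]
      have e1 : (∑ t : Fin k, ∑ y : X, if (t:ℕ) = (s:ℕ) then A (s:ℕ) * Ft (rk x) x y else 0)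
          = A (s:ℕ) * ∑ y : X, Ft (rk x) x y := by
        have h1 : ∀ t : Fin k, (∑ y : X, if (t:ℕ) = (s:ℕ) then A (s:ℕ) * Ft (rk x) x y else 0)
            = (if (t:ℕ) = (s:ℕ) then A (s:ℕ) * ∑ y : X, Ft (rk x) x y else 0) := by
          intro t
          rw [sum_ite_const]
          split_ifs with h
          · rw [Finset.mul_sum]
          · rfl
        rw [Finset.sum_congr rfl fun t _ => h1 t]
        rw [sum_fin_ite_val (s:ℕ) (fun _ => A (s:ℕ) * ∑ y : X, Ft (rk x) x y)]
        rw [dif_pos s.isLt]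
      have e2 : (∑ t : Fin k, ∑ y : X, if ((t:ℕ) = (s:ℕ)+1 ∧ y = x) then
            B (s:ℕ) / (p ((m:ℤ) - ((s:ℕ):ℤ)) : ℝ) else 0)
          = if (s:ℕ)+1 < k then B (s:ℕ) / (p ((m:ℤ) - ((s:ℕ):ℤ)) : ℝ) else 0 := by
        have h1 : ∀ t : Fin k, (∑ y : X, if ((t:ℕ) = (s:ℕ)+1 ∧ y = x) then
              B (s:ℕ) / (p ((m:ℤ) - ((s:ℕ):ℤ)) : ℝ) else 0)
            = (if (t:ℕ) = (s:ℕ)+1 then B (s:ℕ) / (p ((m:ℤ) - ((s:ℕ):ℤ)) : ℝ) else 0) := by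
          intro t
          simp only [ite_and]
          rw [sum_ite_const]
          split_ifs with h
          · rw [Finset.sum_ite_eq' Finset.univ x (fun _ => B (s:ℕ) / (p ((m:ℤ) - ((s:ℕ):ℤ)) : ℝ))]
            simp
          · rfl
        rw [Finset.sum_congr rfl fun t _ => h1 t]
        rw [sum_fin_ite_val ((s:ℕ)+1) (fun _ => B (s:ℕ) / (p ((m:ℤ) - ((s:ℕ):ℤ)) : ℝ))]
        by_cases h : (s:ℕ)+1 < k
        · rw [dif_pos h, if_pos h]
        · rw [dif_neg h, if_neg h]
      rw [e1, e2]
      have hrx : ((rk x : ℕ) : ℤ) = (m:ℤ) - ((s:ℕ):ℤ) := by push_cast; omega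
      have hpxpos : (0:ℝ) < (p ((m:ℤ) - ((s:ℕ):ℤ)) : ℝ) := by
        have := lz_pos x hrx
        rw [← hp] at this
        exact_mod_cast this
      have hpxne := ne_of_gt hpxpos
      by_cases hxN : rk x < N
      · rw [Ftout (rk x) hxN x rfl, hrx]
        by_cases hsk : (s:ℕ)+1 < k
        · rw [if_pos hsk]
          have e := hABsum (s:ℕ)
          rw [mul_one_div, ← add_div, e, div_right_comm, div_self hpxne]
        · rw [if_neg hsk, add_zero, mul_one_div]
          have hs1 : (s:ℕ) = k - 1 := by have := s.isLt; omega
          have hBz : B (s:ℕ) = 0 := by rw [hs1]; exact hBtop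
          have e := hABsum (s:ℕ)
          rw [hBz, add_zero] at e
          rw [e, div_right_comm, div_self hpxne]
      · have hxN' : rk x = N := le_antisymm (hrk x) (not_lt.1 hxN)
        have hFz : ∑ y : X, Ft (rk x) x y = 0 := by
          refine Finset.sum_eq_zero fun y _ => ?_
          rw [hFt]
          dsimp only
          rw [dif_neg hxN]
        rw [hFz, mul_zero, zero_add]
        have hAz : A (s:ℕ) = 0 := hAtop (s:ℕ) (by omega)
        have hsk : (s:ℕ)+1 < k := by
          by_contra hc
          have := s.isLt
          omega
        rw [if_pos hsk]
        have e := hABsum (s:ℕ)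
        rw [hAz, zero_add] at e
        rw [e, div_right_comm, div_self hpxne]
    · -- in-marginal
      rintro ⟨t, y⟩ hb
      dsimp only at hb ⊢
      rw [hq, show (∑ s ∈ range k, p ((m:ℤ)+1 - (s:ℕ))) = Pn k from rfl, ← hW1]
      simp only [Fintype.sum_prod_type]
      simp only [Finset.sum_add_distrib]
      have e1 : (∑ s' : Fin k, ∑ x : X,
            if ((t:ℕ) = (s':ℕ) ∧ (s':ℕ) + rk x = m) then A (s':ℕ) * Ft (rk x) x y else 0)
          = ∑ x : X, (if ((t:ℕ) + rk x = m) then A (t:ℕ) * Ft (rk x) x y else 0) := by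
        have h1 : ∀ s' : Fin k, (∑ x : X,
              if ((t:ℕ) = (s':ℕ) ∧ (s':ℕ) + rk x = m) then A (s':ℕ) * Ft (rk x) x y else 0)
            = (if (t:ℕ) = (s':ℕ) then
                ∑ x : X, (if ((s':ℕ) + rk x = m) then A (s':ℕ) * Ft (rk x) x y else 0) else 0) := by
          intro s'
          simp only [ite_and]
          exact sum_ite_const _ _
        rw [Finset.sum_congr rfl fun s' _ => h1 s']
        rw [sum_fin_ite_val' (t:ℕ)
          (fun s' : Fin k => ∑ x : X, (if ((s':ℕ) + rk x = m) then A (s':ℕ) * Ft (rk x) x y else 0))]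
        rw [dif_pos t.isLt]
      have e2 : (∑ s' : Fin k, ∑ x : X,
            if ((t:ℕ) = (s':ℕ)+1 ∧ y = x ∧ (s':ℕ) + rk x = m) then
              B (s':ℕ) / (p ((m:ℤ) - ((s':ℕ):ℤ)) : ℝ) else 0)
          = (∑ s' : Fin k, if ((t:ℕ) = (s':ℕ)+1) then
              B (s':ℕ) / (p ((m:ℤ) - ((s':ℕ):ℤ)) : ℝ) else 0) := by
        refine Finset.sum_congr rfl fun s' _ => ?_
        by_cases h1 : (t:ℕ) = (s':ℕ)+1
        · rw [if_pos h1, Finset.sum_eq_single y]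
          · rw [if_pos ⟨h1, rfl, by omega⟩]
          · intro x _ hxy
            exact if_neg (by rintro ⟨-, h2, -⟩; exact hxy h2.symm)
          · intro hy
            exact absurd (Finset.mem_univ y) hy
        · rw [if_neg h1]
          exact Finset.sum_eq_zero fun x _ => if_neg (by rintro ⟨h1', -, -⟩; exact h1 h1')
      have e3 : (∑ s' : Fin k, if ((t:ℕ) = (s':ℕ)+1) then
            B (s':ℕ) / (p ((m:ℤ) - ((s':ℕ):ℤ)) : ℝ) else 0)
          = if 1 ≤ (t:ℕ) then B ((t:ℕ)-1) / (p ((m:ℤ) - (((t:ℕ)-1:ℕ):ℤ)) : ℝ) else 0 := by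
        by_cases ht1 : 1 ≤ (t:ℕ)
        · rw [if_pos ht1]
          have hiff : ∀ s' : Fin k, ((t:ℕ) = (s':ℕ)+1) ↔ ((t:ℕ)-1 = (s':ℕ)) := fun s' => by omega
          rw [Finset.sum_congr rfl fun s' _ => if_congr (hiff s') rfl rfl]
          rw [sum_fin_ite_val' ((t:ℕ)-1)
            (fun s' : Fin k => B (s':ℕ) / (p ((m:ℤ) - ((s':ℕ):ℤ)) : ℝ))]
          rw [dif_pos (show (t:ℕ)-1 < k from by have := t.isLt; omega)]
        · rw [if_neg ht1]
          exact Finset.sum_eq_zero fun s' _ => if_neg (by omega)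
      rw [e1, e2, e3]
      have hpy : (0:ℝ) < (p ((m:ℤ)+1 - ((t:ℕ):ℤ)) : ℝ) := by
        have h0 : ((rk y : ℕ) : ℤ) = (m:ℤ)+1 - ((t:ℕ):ℤ) := by push_cast; omega
        have := lz_pos y h0
        rw [← hp] at this
        exact_mod_cast this
      have hpyne := ne_of_gt hpy
      by_cases hty : 1 ≤ rk y
      · have hmt : (t:ℕ) ≤ m := by omega
        have hmtN : m - (t:ℕ) < N := by have := hrk y; omega
        have efirst : (∑ x : X, if ((t:ℕ) + rk x = m) then A (t:ℕ) * Ft (rk x) x y else 0)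
            = A (t:ℕ) * (1 / (p ((m:ℤ)+1 - ((t:ℕ):ℤ)) : ℝ)) := by
          have h1 : (∑ x : X, if ((t:ℕ) + rk x = m) then A (t:ℕ) * Ft (rk x) x y else 0)
              = A (t:ℕ) * ∑ x : X, Ft (m - (t:ℕ)) x y := by
            rw [Finset.mul_sum]
            refine Finset.sum_congr rfl fun x _ => ?_
            by_cases hx : rk x = m - (t:ℕ)
            · rw [if_pos (by omega), hx]
            · rw [if_neg (by omega)]
              have hz : Ft (m - (t:ℕ)) x y = 0 := by
                by_contra hc
                exact hx ((Ftsupp _ x y hc).2.2.1)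
              rw [hz, mul_zero]
          rw [h1, Ftin (m - (t:ℕ)) hmtN y (by omega)]
          rw [show ((m - (t:ℕ) : ℕ) : ℤ) + 1 = (m:ℤ)+1 - ((t:ℕ):ℤ) from by push_cast; omega]
        rw [efirst]
        by_cases ht1 : 1 ≤ (t:ℕ)
        · rw [if_pos ht1]
          have e := hABsum' ((t:ℕ)-1)
          rw [show (t:ℕ)-1+1 = (t:ℕ) from by omega] at e
          rw [show ((m:ℤ) - (((t:ℕ)-1:ℕ):ℤ)) = (m:ℤ)+1 - ((t:ℕ):ℤ) from by push_cast; omega] at e ⊢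
          rw [mul_one_div, ← add_div, e, div_right_comm, div_self hpyne]
        · rw [if_neg ht1, add_zero]
          have ht0 : (t:ℕ) = 0 := by omega
          have hAt : A (t:ℕ) = (p ((m:ℤ)+1 - ((t:ℕ):ℤ)) : ℝ) / W1 := by
            rw [ht0, hA0]
            rw [show ((m:ℤ)+1 - ((0:ℕ):ℤ)) = (m:ℤ)+1 from by push_cast; ring]
          rw [hAt, mul_one_div, div_right_comm, div_self hpyne]
      · have hty0 : rk y = 0 := by omega
        have htm : (t:ℕ) = m + 1 := by omega
        have efirst0 : (∑ x : X, if ((t:ℕ) + rk x = m) then A (t:ℕ) * Ft (rk x) x y else 0) = 0 :=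
          Finset.sum_eq_zero fun x _ => if_neg (by omega)
        rw [efirst0, zero_add]
        have ht1 : 1 ≤ (t:ℕ) := by omega
        rw [if_pos ht1]
        have hAz : A (t:ℕ) = 0 := by
          rw [htm]
          exact hAbot (htm ▸ t.isLt)
        have e := hABsum' ((t:ℕ)-1)
        rw [show (t:ℕ)-1+1 = (t:ℕ) from by omega, hAz, zero_add] at e
        rw [show ((m:ℤ) - (((t:ℕ)-1:ℕ):ℤ)) = (m:ℤ)+1 - ((t:ℕ):ℤ) from by push_cast; omega] at e ⊢
        rw [e, div_right_comm, div_self hpyne]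


lemma lz_natCast (rk : X → ℕ) (i : ℕ) :
    lz rk (i:ℤ) = (Finset.univ.filter fun x => rk x = i).card := by
  unfold lz
  congr 1
  apply Finset.filter_congr
  intro x _
  simp [Nat.cast_inj]

lemma lz_witness {rk : X → ℕ} {r : ℤ} (h : lz rk r ≠ 0) : ∃ x, (rk x : ℤ) = r := by
  obtain ⟨x, hx⟩ := Finset.card_ne_zero.1 h
  exact ⟨x, (Finset.mem_filter.1 hx).2⟩

lemma hasFlows_transport {Y : Type} [Fintype Y] [DecidableEq Y] [PartialOrder Y]
    [PartialOrder X] (e : X ≃ Y) (hmono : ∀ a b : X, a ≤ b ↔ e a ≤ e b)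
    {rkY : Y → ℕ} {N : ℕ} (h : HasFlows Y rkY N) :
    HasFlows X (fun a => rkY (e a)) N := by
  obtain ⟨h1, h2, h3, h4⟩ := h
  have hlz : ∀ r : ℤ, lz (fun a => rkY (e a)) r = lz rkY r := by
    intro r
    unfold lz
    apply Finset.card_bij (fun a _ => e a)
    · intro a ha
      simp only [Finset.mem_filter, Finset.mem_univ, true_and] at ha ⊢
      exact ha
    · intro a _ a' _ hee
      exact e.injective hee
    · intro b hb
      refine ⟨e.symm b, ?_, e.apply_symm_apply b⟩
      simp only [Finset.mem_filter, Finset.mem_univ, true_and] at hb ⊢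
      rw [e.apply_symm_apply]
      exact hb
  refine ⟨fun a => h1 (e a), ?_, ?_, ?_⟩
  · intro i hi
    rw [hlz]
    exact h2 i hi
  · intro a b hba
    rw [hlz, hlz, hlz, hlz]
    exact h3 a b hba
  · intro i hi
    obtain ⟨f, fnn, fsupp, fout, fin⟩ := h4 i hi
    refine ⟨fun a b => f (e a) (e b), fun a b => fnn _ _, ?_, ?_, ?_⟩
    · intro a b hne
      obtain ⟨hle, hr1, hr2⟩ := fsupp _ _ hne
      exact ⟨(hmono a b).2 hle, hr1, hr2⟩
    · intro a ha
      rw [hlz]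
      rw [Equiv.sum_comp e (fun y => f (e a) y)]
      exact fout (e a) ha
    · intro b hb
      rw [hlz]
      rw [Equiv.sum_comp e (fun x => f x (e b))]
      exact fin (e b) hb

open scoped Classical in
lemma local_lym [PartialOrder X] {rk : X → ℕ} {N : ℕ} (h : HasFlows X rk N)
    (i : ℕ) (hi : i < N) (A : Finset X) (hA : ∀ a ∈ A, rk a = i+1) :
    (A.card : ℝ) / (lz rk ((i:ℤ)+1) : ℝ)
      ≤ ((Finset.univ.filter fun z => rk z = i ∧ ∃ a ∈ A, z ≤ a).card : ℝ) / (lz rk (i:ℤ) : ℝ) := by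
  obtain ⟨f, fnn, fsupp, fout, fin⟩ := h.2.2.2 i hi
  set Sh := Finset.univ.filter fun z => rk z = i ∧ ∃ a ∈ A, z ≤ a with hSh
  calc (A.card : ℝ) / (lz rk ((i:ℤ)+1) : ℝ)
      = ∑ _y ∈ A, 1 / (lz rk ((i:ℤ)+1) : ℝ) := by
        rw [Finset.sum_const, nsmul_eq_mul, mul_one_div]
    _ = ∑ y ∈ A, ∑ x, f x y := Finset.sum_congr rfl fun y hy => (fin y (hA y hy)).symm
    _ = ∑ x, ∑ y ∈ A, f x y := Finset.sum_comm
    _ = ∑ x ∈ Sh, ∑ y ∈ A, f x y := by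
        refine (Finset.sum_subset (Finset.subset_univ Sh) fun x _ hx => ?_).symm
        refine Finset.sum_eq_zero fun y hy => ?_
        by_contra hc
        obtain ⟨hle, hrx, _⟩ := fsupp x y hc
        exact hx (Finset.mem_filter.2 ⟨Finset.mem_univ x, hrx, y, hy, hle⟩)
    _ ≤ ∑ x ∈ Sh, 1 / (lz rk (i:ℤ) : ℝ) := by
        refine Finset.sum_le_sum fun x hx => ?_
        have hrx : rk x = i := (Finset.mem_filter.1 hx).2.1
        rw [← fout x hrx]
        exact Finset.sum_le_sum_of_subset_of_nonneg (Finset.subset_univ A)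
          (fun y _ _ => fnn x y)
    _ = (Sh.card : ℝ) / (lz rk (i:ℤ) : ℝ) := by
        rw [Finset.sum_const, nsmul_eq_mul, mul_one_div]

open scoped Classical in
lemma lym_of_hasFlows [PartialOrder X] {rk : X → ℕ} {N : ℕ} (h : HasFlows X rk N)
    (F : Finset X) (hF : IsAntichain (· ≤ ·) (F : Set X)) :
    ∑ i ∈ range (N+1),
      ((F.filter fun x => rk x = i).card : ℝ)
        / ((Finset.univ.filter fun x => rk x = i).card : ℝ) ≤ 1 := by
  classical
  set G : ℕ → Finset X := fun t => Nat.rec (F.filter fun z => rk z = N)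
    (fun t Gt => (F.filter fun z => rk z = N - (t+1)) ∪
      (Finset.univ.filter fun z => rk z = N - (t+1) ∧ ∃ a ∈ Gt, z ≤ a)) t with hG
  have main : ∀ t, t ≤ N →
      (∀ z ∈ G t, rk z = N - t) ∧
      (∀ z ∈ G t, ∃ w ∈ F, z ≤ w ∧ N - t ≤ rk w) ∧
      (∑ j ∈ range (t+1),
        ((F.filter fun x => rk x = N - j).card : ℝ) / (lz rk ((N - j : ℕ):ℤ) : ℝ))
        ≤ ((G t).card : ℝ) / (lz rk ((N - t : ℕ):ℤ) : ℝ) := by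
    intro t
    induction t with
    | zero =>
      intro _
      refine ⟨?_, ?_, ?_⟩
      · intro z hz
        simpa using (Finset.mem_filter.1 hz).2
      · intro z hz
        exact ⟨z, (Finset.mem_filter.1 hz).1, le_rfl, le_of_eq ((Finset.mem_filter.1 hz).2).symm⟩
      · rw [Finset.sum_range_one]
        simp only [Nat.sub_zero]
        exact le_rfl
    | succ t iht =>
      intro ht1
      obtain ⟨ha, hb, hc⟩ := iht (by omega)
      have hGsucc : G (t+1) = (F.filter fun z => rk z = N - (t+1)) ∪
          (Finset.univ.filter fun z => rk z = N - (t+1) ∧ ∃ a ∈ G t, z ≤ a) := rfl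
      refine ⟨?_, ?_, ?_⟩
      · intro z hz
        rw [hGsucc, Finset.mem_union] at hz
        rcases hz with hz | hz
        · exact (Finset.mem_filter.1 hz).2
        · exact (Finset.mem_filter.1 hz).2.1
      · intro z hz
        rw [hGsucc, Finset.mem_union] at hz
        rcases hz with hz | hz
        · exact ⟨z, (Finset.mem_filter.1 hz).1, le_rfl, le_of_eq ((Finset.mem_filter.1 hz).2).symm⟩
        · obtain ⟨a, haG, hza⟩ := (Finset.mem_filter.1 hz).2.2
          obtain ⟨w, hwF, haw, hwr⟩ := hb a haG
          exact ⟨w, hwF, le_trans hza haw, by omega⟩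
      · have hdisj : Disjoint (F.filter fun z => rk z = N - (t+1))
            (Finset.univ.filter fun z => rk z = N - (t+1) ∧ ∃ a ∈ G t, z ≤ a) := by
          rw [Finset.disjoint_left]
          intro z hz1 hz2
          have hzF : z ∈ F := (Finset.mem_filter.1 hz1).1
          have hzr : rk z = N - (t+1) := (Finset.mem_filter.1 hz1).2
          obtain ⟨a, haG, hza⟩ := (Finset.mem_filter.1 hz2).2.2
          obtain ⟨w, hwF, haw, hwr⟩ := hb a haG
          have hzw : z ≤ w := le_trans hza haw
          have hne : z ≠ w := by
            intro hzw'
            subst hzw'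
            omega
          exact hF hzF hwF hne hzw
        have hcard : ((G (t+1)).card : ℝ)
            = ((F.filter fun z => rk z = N - (t+1)).card : ℝ)
              + ((Finset.univ.filter fun z => rk z = N - (t+1) ∧ ∃ a ∈ G t, z ≤ a).card : ℝ) := by
          rw [hGsucc, Finset.card_union_of_disjoint hdisj]
          push_cast
          ring
        have hll := local_lym h (N - (t+1)) (by omega) (G t)
          (fun a haG => by have := ha a haG; omega)
        have hidx : ((N - (t+1) : ℕ) : ℤ) + 1 = ((N - t : ℕ) : ℤ) := by push_cast; omega
        rw [hidx] at hll
        rw [Finset.sum_range_succ]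
        calc (∑ j ∈ range (t+1),
              ((F.filter fun x => rk x = N - j).card : ℝ) / (lz rk ((N - j : ℕ):ℤ) : ℝ))
              + ((F.filter fun x => rk x = N - (t+1)).card : ℝ) / (lz rk ((N - (t+1) : ℕ):ℤ) : ℝ)
            ≤ ((G t).card : ℝ) / (lz rk ((N - t : ℕ):ℤ) : ℝ)
              + ((F.filter fun x => rk x = N - (t+1)).card : ℝ) / (lz rk ((N - (t+1) : ℕ):ℤ) : ℝ) := by
              exact add_le_add hc le_rfl
          _ ≤ ((Finset.univ.filter fun z => rk z = N - (t+1) ∧ ∃ a ∈ G t, z ≤ a).card : ℝ)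
                / (lz rk ((N - (t+1) : ℕ):ℤ) : ℝ)
              + ((F.filter fun x => rk x = N - (t+1)).card : ℝ) / (lz rk ((N - (t+1) : ℕ):ℤ) : ℝ) := by
              exact add_le_add hll le_rfl
          _ = ((G (t+1)).card : ℝ) / (lz rk ((N - (t+1) : ℕ):ℤ) : ℝ) := by
              rw [hcard, ← add_div]
              ring
  obtain ⟨haN, _, hcN⟩ := main N le_rfl
  have hGN : ((G N).card : ℝ) / (lz rk ((N - N : ℕ):ℤ) : ℝ) ≤ 1 := by
    have hsub : G N ⊆ Finset.univ.filter fun z => rk z = N - N :=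
      fun z hz => Finset.mem_filter.2 ⟨Finset.mem_univ z, haN z hz⟩
    have hle := Finset.card_le_card hsub
    have hlzpos : 0 < lz rk ((N - N : ℕ):ℤ) := h.2.1 (N - N) (by omega)
    rw [div_le_one (by exact_mod_cast hlzpos)]
    rw [lz_natCast]
    exact_mod_cast hle
  have hrefl : (∑ i ∈ range (N+1),
      ((F.filter fun x => rk x = i).card : ℝ)
        / ((Finset.univ.filter fun x => rk x = i).card : ℝ))
      = ∑ j ∈ range (N+1),
        ((F.filter fun x => rk x = N - j).card : ℝ) / (lz rk ((N - j : ℕ):ℤ) : ℝ) := by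
    rw [← Finset.sum_range_reflect]
    refine Finset.sum_congr rfl fun j hj => ?_
    rw [show N + 1 - 1 - j = N - j from by omega, lz_natCast]
  rw [hrefl]
  exact le_trans hcN hGN

def eSucc (n : ℕ) (k : Fin (n+1) → ℕ) :
    (∀ i, Fin (k i)) ≃ Fin (k 0) × (∀ i : Fin n, Fin (k i.succ)) where
  toFun x := (x 0, fun i => x i.succ)
  invFun y i := Fin.cases y.1 y.2 i
  left_inv x := by
    funext i
    induction i using Fin.cases with
    | zero => simp
    | succ j => simp
  right_inv y := by
    ext i
    · simp
    · simp

theorem hasFlows_pi : ∀ (n : ℕ) (k : Fin n → ℕ), (∀ i, 1 ≤ k i) →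
    HasFlows (∀ i, Fin (k i)) (fun x => ∑ i, (x i : ℕ)) (∑ i, (k i - 1)) := by
  intro n
  induction n with
  | zero =>
    intro k hk
    refine ⟨?_, ?_, ?_, ?_⟩
    · intro x; simp
    · intro i hi
      have hi0 : i = 0 := by simpa using hi
      subst hi0
      exact lz_pos (fun i => i.elim0) (by simp)
    · intro a b hba
      rcases eq_or_ne (lz (fun x : ∀ i : Fin 0, Fin (k i) => ∑ i, ((x i : ℕ))) (a+1)) 0 with h0 | h0
      · rw [h0, zero_mul]; exact Nat.zero_le _
      rcases eq_or_ne (lz (fun x : ∀ i : Fin 0, Fin (k i) => ∑ i, ((x i : ℕ))) (b-1)) 0 with h1 | h1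
      · rw [h1, mul_zero]; exact Nat.zero_le _
      obtain ⟨x, hx⟩ := lz_witness h0
      obtain ⟨x', hx'⟩ := lz_witness h1
      simp only [Finset.univ_eq_empty, Finset.sum_empty, Nat.cast_zero] at hx hx'
      omega
    · intro i hi
      simp at hi
  | succ n ih =>
    intro k hk
    have hprod := hasFlows_prod (ih (fun i => k i.succ) (fun i => hk i.succ)) (k 0) (hk 0)
    have htrans := hasFlows_transport (eSucc n k)
      (hmono := ?_) (h := hprod)
    · have hrkeq : (fun a : ∀ i, Fin (k i) =>
          (fun y : Fin (k 0) × (∀ i : Fin n, Fin (k i.succ)) => (y.1:ℕ) + ∑ i, ((y.2 i : ℕ)))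
            ((eSucc n k) a))
          = fun x : ∀ i, Fin (k i) => ∑ i, (x i : ℕ) := by
        funext a
        exact (Fin.sum_univ_succ fun i => ((a i : ℕ))).symm
      have hNeq : k 0 - 1 + ∑ i : Fin n, (k i.succ - 1) = ∑ i : Fin (n+1), (k i - 1) :=
        (Fin.sum_univ_succ fun i => k i - 1).symm
      rw [hrkeq, hNeq] at htrans
      exact htrans
    · intro a b
      constructor
      · intro hab
        exact ⟨hab 0, fun i => hab i.succ⟩
      · rintro ⟨h0, hs⟩ i
        induction i using Fin.cases with
        | zero => exact h0
        | succ j => exact hs j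

end MLYM

/-- LYM inequality for antichains in the product poset
L(k₁,…,kₙ) = {0,…,k₁-1} × ⋯ × {0,…,kₙ-1}. -/
theorem multiset_LYM (n : ℕ) (k : Fin n → ℕ) (F : Finset (∀ i, Fin (k i)))
    (hF : IsAntichain (· ≤ ·) (F : Set (∀ i, Fin (k i)))) :
    ∑ i ∈ Finset.range (∑ j, (k j - 1) + 1),
      (((F.filter (fun x => ∑ j, ((x j : ℕ)) = i)).card : ℝ) /
        ((Finset.univ.filter (fun x : ∀ i, Fin (k i) => ∑ j, ((x j : ℕ)) = i)).card : ℝ)) ≤ 1 := by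
  by_cases hk : ∀ i, 1 ≤ k i
  · exact MLYM.lym_of_hasFlows (MLYM.hasFlows_pi n k hk) F hF
  · push_neg at hk
    obtain ⟨i0, hi0⟩ := hk
    have hemp : IsEmpty (∀ i, Fin (k i)) := ⟨fun x => absurd (x i0).isLt (by omega)⟩
    have hz : ∀ i ∈ Finset.range (∑ j, (k j - 1) + 1),
        (((F.filter (fun x => ∑ j, ((x j : ℕ)) = i)).card : ℝ) /
          ((Finset.univ.filter (fun x : ∀ i, Fin (k i) => ∑ j, ((x j : ℕ)) = i)).card : ℝ)) = 0 := by
      intro i _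
      have he : (F.filter (fun x => ∑ j, ((x j : ℕ)) = i)) = ∅ :=
        Finset.eq_empty_of_forall_notMem fun x _ => (hemp.false x).elim
      rw [he]
      simp
    rw [Finset.sum_congr rfl hz]
    simp
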